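/- Let n ≥ 3 be odd and S ⊆ {1,…,n−1}. Then |hat{P}_D(S;n)| = Σ_{k=1}^{(n−1)/2} (|P(S;n)^{↗2k+1}| + |P(S;n)^{↗2k}|)·Φ(n−1, 2k) + |underline{P(S;n)}|·2^{n−1}, and |hat{P}_D(S∪{n};n)| = Σ_{k=1}^{(n−1)/2} (|P(S;n)^{↗2k+1}| + |P(S;n)^{↗2k}|)·Ψ(n−1, 2k). -/
import Mathlib


open Equiv

/-- Position `i` (1-based, with `1 < i < n`) is a peak of the permutation `π ∈ S_n`.
The value of `π` at 1-based position `j` is `π ⟨j - 1, _⟩`; values are 0-based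
(`π i = v` means the written value is `v + 1`). -/
def IsPeak {n : ℕ} (π : Equiv.Perm (Fin n)) (i : ℕ) : Prop :=
  ∃ h : 1 < i ∧ i < n,
    π ⟨i - 2, by omega⟩ < π ⟨i - 1, by omega⟩ ∧ π ⟨i, by omega⟩ < π ⟨i - 1, by omega⟩

/-- `P(S;n)`: permutations in `S_n` with peak set `S`. -/
def peakSetEq (n : ℕ) (S : Finset ℕ) : Set (Equiv.Perm (Fin n)) :=
  {π | ∀ i : ℕ, IsPeak π i ↔ i ∈ S}

/-- `π` ends with an ascent to `k`: `π_{n-1} < π_n` and `π_n = k` (values written `1..n`). -/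
def EndsAscentTo (n k : ℕ) (π : Equiv.Perm (Fin n)) : Prop :=
  ∃ h : 2 ≤ n, π ⟨n - 2, by omega⟩ < π ⟨n - 1, by omega⟩ ∧ ((π ⟨n - 1, by omega⟩ : ℕ) + 1 = k)

/-- `π` ends with a descent to `k`: `π_{n-1} > π_n` and `π_n = k`. -/
def EndsDescentTo (n k : ℕ) (π : Equiv.Perm (Fin n)) : Prop :=
  ∃ h : 2 ≤ n, π ⟨n - 1, by omega⟩ < π ⟨n - 2, by omega⟩ ∧ ((π ⟨n - 1, by omega⟩ : ℕ) + 1 = k)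

/-- `π` ends with an ascent: `π_{n-1} < π_n`. -/
def EndsAscent (n : ℕ) (π : Equiv.Perm (Fin n)) : Prop :=
  ∃ h : 2 ≤ n, π ⟨n - 2, by omega⟩ < π ⟨n - 1, by omega⟩

/-- `π` ends with a descent: `π_{n-1} > π_n`. -/
def EndsDescent (n : ℕ) (π : Equiv.Perm (Fin n)) : Prop :=
  ∃ h : 2 ≤ n, π ⟨n - 1, by omega⟩ < π ⟨n - 2, by omega⟩

/-- `P(S;n)^{↗k}` -/
def ascTo (n : ℕ) (S : Finset ℕ) (k : ℕ) : Set (Equiv.Perm (Fin n)) :=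
  {π ∈ peakSetEq n S | EndsAscentTo n k π}

/-- `P(S;n)_{↘k}` -/
def descTo (n : ℕ) (S : Finset ℕ) (k : ℕ) : Set (Equiv.Perm (Fin n)) :=
  {π ∈ peakSetEq n S | EndsDescentTo n k π}

/-- `overline{P(S;n)}`: elements of `P(S;n)` ending with an ascent. -/
def overlineP (n : ℕ) (S : Finset ℕ) : Set (Equiv.Perm (Fin n)) :=
  {π ∈ peakSetEq n S | EndsAscent n π}

/-- `underline{P(S;n)}`: elements of `P(S;n)` ending with a descent. -/
def underlineP (n : ℕ) (S : Finset ℕ) : Set (Equiv.Perm (Fin n)) :=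
  {π ∈ peakSetEq n S | EndsDescent n π}

/-- Type `C_n` mirrored permutations: `τ_{2n-i+1} = 2n - τ_i + 1` for all `1 ≤ i ≤ 2n`
(1-based); equivalently `τ (j.rev) = (τ j).rev` in 0-based `Fin (2*n)` terms. -/
def mirroredC (n : ℕ) : Set (Equiv.Perm (Fin (2 * n))) :=
  {τ | ∀ j, τ j.rev = (τ j).rev}

/-- Type `D_n` mirrored permutations: mirrored, and the first `n` positions carry an even
number of values from `{n+1, …, 2n}` (i.e. 0-based values `≥ n`). -/
def mirroredD (n : ℕ) : Set (Equiv.Perm (Fin (2 * n))) :=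
  {τ | (∀ j, τ j.rev = (τ j).rev) ∧
    Even ((Finset.univ.filter fun j : Fin (2 * n) => (j : ℕ) < n ∧ n ≤ (τ j : ℕ)).card)}

/-- The pattern bundle `𝒞_n(π)`: mirrored permutations whose first `n` entries have the
same relative order as `π`. -/
def bundleC (n : ℕ) (π : Equiv.Perm (Fin n)) : Set (Equiv.Perm (Fin (2 * n))) :=
  {τ ∈ mirroredC n | ∀ i j : Fin n,
    τ (Fin.castLE (by omega) i) < τ (Fin.castLE (by omega) j) ↔ π i < π j}

/-- The pattern bundle `𝒟_n(π)`. -/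
def bundleD (n : ℕ) (π : Equiv.Perm (Fin n)) : Set (Equiv.Perm (Fin (2 * n))) :=
  {τ ∈ mirroredD n | ∀ i j : Fin n,
    τ (Fin.castLE (by omega) i) < τ (Fin.castLE (by omega) j) ↔ π i < π j}

/-- Position `i` (1-based, `1 < i < n`) is a peak of the first `n` entries of `τ`. -/
def IsPeakFirst (n : ℕ) (τ : Equiv.Perm (Fin (2 * n))) (i : ℕ) : Prop :=
  ∃ h : 1 < i ∧ i < n,
    τ ⟨i - 2, by omega⟩ < τ ⟨i - 1, by omega⟩ ∧ τ ⟨i, by omega⟩ < τ ⟨i - 1, by omega⟩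

/-- `P_C(S;n)`: mirrored permutations of type `C_n` whose first `n` entries have peak set `S`. -/
def P_C (n : ℕ) (S : Finset ℕ) : Set (Equiv.Perm (Fin (2 * n))) :=
  {τ ∈ mirroredC n | ∀ i : ℕ, IsPeakFirst n τ i ↔ i ∈ S}

/-- `P_D(S;n)`. -/
def P_D (n : ℕ) (S : Finset ℕ) : Set (Equiv.Perm (Fin (2 * n))) :=
  {τ ∈ mirroredD n | ∀ i : ℕ, IsPeakFirst n τ i ↔ i ∈ S}

/-- Position `i` (1-based, `1 < i ≤ n`) is a peak of the first `n+1` entries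
`τ_1 ⋯ τ_n τ_{n+1}` of `τ` (so a peak at position `n` is possible). -/
def IsPeakHat (n : ℕ) (τ : Equiv.Perm (Fin (2 * n))) (i : ℕ) : Prop :=
  ∃ h : 1 < i ∧ i ≤ n,
    τ ⟨i - 2, by omega⟩ < τ ⟨i - 1, by omega⟩ ∧ τ ⟨i, by omega⟩ < τ ⟨i - 1, by omega⟩

/-- `hat{P}_C(S;n)`: mirrored permutations of type `C_n` such that `τ_1 ⋯ τ_n τ_{n+1}`
has peak set `S`. -/
def hatPC (n : ℕ) (S : Finset ℕ) : Set (Equiv.Perm (Fin (2 * n))) :=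
  {τ ∈ mirroredC n | ∀ i : ℕ, IsPeakHat n τ i ↔ i ∈ S}

/-- `hat{P}_D(S;n)`. -/
def hatPD (n : ℕ) (S : Finset ℕ) : Set (Equiv.Perm (Fin (2 * n))) :=
  {τ ∈ mirroredD n | ∀ i : ℕ, IsPeakHat n τ i ↔ i ∈ S}

/-- `Φ(n,k) = Σ_{i=k}^n C(n,i)`. -/
def Phi (n k : ℕ) : ℕ := ∑ i ∈ Finset.Icc k n, n.choose i

/-- `Ψ(n,k) = 2^n - Φ(n,k)`. -/
def Psi (n k : ℕ) : ℕ := 2 ^ n - Phi n k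

/-- The group `ℬ_n` of signed permutations on `n` letters. -/
def SignedPerms (n : ℕ) : Set (Fin n → ℤ) :=
  {β | (∀ i, 1 ≤ |β i| ∧ |β i| ≤ (n : ℤ)) ∧ Function.Injective fun i => |β i|}

/-- Position `i` (`1 ≤ i ≤ n - 1`) is a peak of the sequence `0, β_1, …, β_n`. -/
def IsPeakB (n : ℕ) (β : Fin n → ℤ) (i : ℕ) : Prop :=
  ∃ h : 1 ≤ i ∧ i < n,
    (if hi : 2 ≤ i then β ⟨i - 2, by omega⟩ else 0) < β ⟨i - 1, by omega⟩ ∧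
      β ⟨i, by omega⟩ < β ⟨i - 1, by omega⟩

/-- `hat{P}_B(R;n)`: signed permutations such that `0, β_1, …, β_n` has peak set `R`. -/
def hatPB (n : ℕ) (R : Finset ℕ) : Set (Fin n → ℤ) :=
  {β ∈ SignedPerms n | ∀ i : ℕ, IsPeakB n β i ↔ i ∈ R}


open Finset in
section
namespace S16


variable {n : ℕ}

/-- The value chosen for class `c`: large if `c ∈ E`, small otherwise. -/
def vfun (E : Finset (Fin n)) (c : Fin n) : Fin (2 * n) :=
  if c ∈ E then (Fin.castLE (by omega) c).rev else Fin.castLE (by omega) c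

lemma vfun_val (E : Finset (Fin n)) (c : Fin n) :
    (vfun E c : ℕ) = if c ∈ E then 2 * n - 1 - (c : ℕ) else (c : ℕ) := by
  unfold vfun
  split <;> simp [Fin.val_rev] <;> omega

lemma vfun_lt_iff (E : Finset (Fin n)) (c : Fin n) :
    (vfun E c : ℕ) < n ↔ c ∉ E := by
  have hc := c.isLt
  rw [vfun_val]; split <;> simp_all <;> omega

lemma vfun_inj (E : Finset (Fin n)) : Function.Injective (vfun E) := by
  intro a b hab
  have ha := a.isLt; have hb := b.isLt
  have : (vfun E a : ℕ) = (vfun E b : ℕ) := by rw [hab]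
  rw [vfun_val, vfun_val] at this
  split_ifs at this with h1 h2 h2 <;> [skip; omega; omega; skip] <;> exact Fin.ext (by omega)

/-- The value set determined by `E`. -/
def bigV (E : Finset (Fin n)) : Finset (Fin (2 * n)) := univ.image (vfun E)

lemma card_bigV (E : Finset (Fin n)) : (bigV E).card = n := by
  rw [bigV, Finset.card_image_of_injective _ (vfun_inj E), card_univ, Fintype.card_fin]

/-- The first `n` entries of the mirrored permutation built from `(π, E)`. -/
def tfun (π : Perm (Fin n)) (E : Finset (Fin n)) (i : Fin n) : Fin (2 * n) :=
  ((bigV E).orderIsoOfFin (card_bigV E) (π i) : Fin (2 * n))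

lemma tfun_mem (π : Perm (Fin n)) (E : Finset (Fin n)) (i : Fin n) :
    tfun π E i ∈ bigV E := ((bigV E).orderIsoOfFin (card_bigV E) (π i)).2

lemma tfun_lt_iff (π : Perm (Fin n)) (E : Finset (Fin n)) (i j : Fin n) :
    tfun π E i < tfun π E j ↔ π i < π j := by
  unfold tfun
  rw [Subtype.coe_lt_coe, OrderIso.lt_iff_lt]

lemma tfun_inj (π : Perm (Fin n)) (E : Finset (Fin n)) : Function.Injective (tfun π E) := by
  intro a b hab
  have := Subtype.coe_injective hab
  exact π.injective (((bigV E).orderIsoOfFin (card_bigV E)).injective this)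

/-- The full mirrored permutation (as a function). -/
def Ffun (π : Perm (Fin n)) (E : Finset (Fin n)) (j : Fin (2 * n)) : Fin (2 * n) :=
  if h : (j : ℕ) < n then tfun π E ⟨j, h⟩
  else (tfun π E ⟨2 * n - 1 - (j : ℕ), by have := j.isLt; omega⟩).rev

lemma vfun_ne_rev (E : Finset (Fin n)) (c c' : Fin n) : vfun E c ≠ (vfun E c').rev := by
  intro h
  have hc := c.isLt; have hc' := c'.isLt
  have hval : (vfun E c : ℕ) = 2 * n - 1 - (vfun E c' : ℕ) := by
    rw [h, Fin.val_rev]; omega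
  rw [vfun_val, vfun_val] at hval
  split_ifs at hval with h1 h2 h2
  · omega
  · have : c = c' := Fin.ext (by omega)
    subst this; exact h2 h1
  · have : c = c' := Fin.ext (by omega)
    subst this; exact h1 h2
  · omega

lemma Ffun_inj (π : Perm (Fin n)) (E : Finset (Fin n)) : Function.Injective (Ffun π E) := by
  intro a b hab
  have ha := a.isLt; have hb := b.isLt
  unfold Ffun at hab
  split_ifs at hab with h1 h2 h2
  · have := tfun_inj π E hab
    exact Fin.ext (by have := Fin.mk.injEq (a : ℕ) h1 (b : ℕ) h2 ▸ congrArg Fin.val this; simpa using this)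
  · -- a pos small, b pos large : tfun = (tfun).rev, impossible
    exfalso
    obtain ⟨c, -, hc⟩ := Finset.mem_image.mp (tfun_mem π E ⟨a, h1⟩)
    obtain ⟨c', -, hc'⟩ := Finset.mem_image.mp (tfun_mem π E ⟨2 * n - 1 - (b : ℕ), by omega⟩)
    exact vfun_ne_rev E c c' (by rw [hc, hc', hab])
  · exfalso
    obtain ⟨c, -, hc⟩ := Finset.mem_image.mp (tfun_mem π E ⟨b, h2⟩)
    obtain ⟨c', -, hc'⟩ := Finset.mem_image.mp (tfun_mem π E ⟨2 * n - 1 - (a : ℕ), by omega⟩)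
    exact vfun_ne_rev E c c' (by rw [hc, hc', hab])
  · have := tfun_inj π E (Fin.rev_injective hab)
    have hv := congrArg Fin.val this
    simp only at hv
    exact Fin.ext (by omega)

/-- The mirrored permutation built from `(π, E)`. -/
noncomputable def Fperm (π : Perm (Fin n)) (E : Finset (Fin n)) : Perm (Fin (2 * n)) :=
  Equiv.ofBijective _ (Finite.injective_iff_bijective.mp (Ffun_inj π E))

lemma Fperm_apply (π : Perm (Fin n)) (E : Finset (Fin n)) (j : Fin (2 * n)) :
    Fperm π E j = Ffun π E j := rfl


variable {n : ℕ}

lemma Ffun_mirror (π : Perm (Fin n)) (E : Finset (Fin n)) (j : Fin (2 * n)) :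
    Ffun π E j.rev = (Ffun π E j).rev := by
  have hj := j.isLt
  have hrev : (j.rev : ℕ) = 2 * n - 1 - (j : ℕ) := by rw [Fin.val_rev]; omega
  by_cases h : (j : ℕ) < n
  · have h2 : ¬ ((j.rev : ℕ) < n) := by omega
    unfold Ffun
    rw [dif_neg h2, dif_pos h]
    congr 2
    exact Fin.ext (by simp only [hrev]; omega)
  · have h2 : (j.rev : ℕ) < n := by omega
    unfold Ffun
    rw [dif_pos h2, dif_neg h, Fin.rev_rev]
    congr 1
    exact Fin.ext (by simp only [hrev])

lemma lower_filter (s : Finset (Fin n)) (h : ∀ a b : Fin n, a ≤ b → b ∈ s → a ∈ s)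
    (r : Fin n) : r ∈ s ↔ (r : ℕ) < s.card := by
  constructor
  · intro hr
    have hsub : Finset.Iic r ⊆ s := fun a ha => h a r (Finset.mem_Iic.mp ha) hr
    have := Finset.card_le_card hsub
    rw [Fin.card_Iic] at this
    omega
  · intro hr
    by_contra hrs
    have hsub : s ⊆ Finset.Iio r := by
      intro b hb
      rw [Finset.mem_Iio]
      by_contra hbr
      exact hrs (h r b (le_of_not_gt hbr) hb)
    have := Finset.card_le_card hsub
    rw [Fin.card_Iio] at this
    omega

lemma card_bigV_small (E : Finset (Fin n)) :
    ((bigV E).filter (fun v : Fin (2 * n) => (v : ℕ) < n)).card = n - E.card := by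
  have himg : ((univ.filter (fun c : Fin n => ((vfun E c : ℕ) < n))).image (vfun E))
      = (bigV E).filter (fun v : Fin (2 * n) => (v : ℕ) < n) := by
    rw [bigV, Finset.filter_image]
  rw [← himg, Finset.card_image_of_injective _ (vfun_inj E)]
  have : univ.filter (fun c : Fin n => ((vfun E c : ℕ) < n)) = univ.filter (fun c => c ∉ E) := by
    apply Finset.filter_congr
    intro c _
    simp [vfun_lt_iff]
  rw [this, Finset.filter_not, Finset.filter_mem_eq_inter, Finset.univ_inter]
  simp [Finset.card_sdiff_of_subset (Finset.subset_univ E)]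

lemma card_E_le (E : Finset (Fin n)) : E.card ≤ n := by
  simpa using Finset.card_le_card (Finset.subset_univ E)

lemma image_orderIso (E : Finset (Fin n)) :
    univ.image (fun r : Fin n => (((bigV E).orderIsoOfFin (card_bigV E)) r : Fin (2 * n)))
      = bigV E := by
  ext v
  simp only [Finset.mem_image, Finset.mem_univ, true_and]
  constructor
  · rintro ⟨r, rfl⟩
    exact (((bigV E).orderIsoOfFin (card_bigV E)) r).2
  · intro hv
    exact ⟨((bigV E).orderIsoOfFin (card_bigV E)).symm ⟨v, hv⟩, by simp⟩

lemma orderIso_coe_inj (E : Finset (Fin n)) :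
    Function.Injective (fun r : Fin n =>
      (((bigV E).orderIsoOfFin (card_bigV E)) r : Fin (2 * n))) := by
  intro a b hab
  exact ((bigV E).orderIsoOfFin (card_bigV E)).injective (Subtype.coe_injective hab)

lemma tfun_lt_n_iff (π : Perm (Fin n)) (E : Finset (Fin n)) (i : Fin n) :
    (tfun π E i : ℕ) < n ↔ (π i : ℕ) < n - E.card := by
  set f : Fin n → Fin (2 * n) :=
    fun r => (((bigV E).orderIsoOfFin (card_bigV E)) r : Fin (2 * n)) with hf
  set s : Finset (Fin n) := univ.filter (fun r : Fin n => (f r : ℕ) < n) with hs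
  have hlow : ∀ a b : Fin n, a ≤ b → b ∈ s → a ∈ s := by
    intro a b hab hb
    rw [hs, Finset.mem_filter] at hb ⊢
    refine ⟨Finset.mem_univ _, lt_of_le_of_lt ?_ hb.2⟩
    exact_mod_cast Subtype.coe_le_coe.mpr (((bigV E).orderIsoOfFin (card_bigV E)).le_iff_le.mpr hab)
  have hcard : s.card = n - E.card := by
    have himg : (univ.filter fun r : Fin n => (f r : ℕ) < n).image f
        = (bigV E).filter (fun v : Fin (2 * n) => (v : ℕ) < n) := by
      ext v
      simp only [Finset.mem_image, Finset.mem_filter, Finset.mem_univ, true_and]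
      constructor
      · rintro ⟨r, hr, rfl⟩
        exact ⟨(((bigV E).orderIsoOfFin (card_bigV E)) r).2, hr⟩
      · rintro ⟨hv, hvn⟩
        have happ : f (((bigV E).orderIsoOfFin (card_bigV E)).symm ⟨v, hv⟩) = v := by
          rw [hf]
          exact congrArg Subtype.val
            (((bigV E).orderIsoOfFin (card_bigV E)).apply_symm_apply ⟨v, hv⟩)
        exact ⟨((bigV E).orderIsoOfFin (card_bigV E)).symm ⟨v, hv⟩, by rw [happ]; exact hvn, happ⟩
    rw [← card_bigV_small E, ← himg, hs]
    exact (Finset.card_image_of_injective _ (by rw [hf]; exact orderIso_coe_inj E)).symm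
  have := lower_filter s hlow (π i)
  rw [hcard] at this
  rw [← this, hs, Finset.mem_filter]
  unfold tfun
  simp [hf]

lemma tfun_ge_n_iff (π : Perm (Fin n)) (E : Finset (Fin n)) (i : Fin n) :
    n ≤ (tfun π E i : ℕ) ↔ n ≤ (π i : ℕ) + E.card := by
  have h1 := tfun_lt_n_iff π E i
  have h2 := card_E_le E
  omega

lemma card_val_lt (m : ℕ) (hm : m ≤ n) :
    (univ.filter fun i : Fin n => (i : ℕ) < m).card = m := by
  rw [← Finset.card_image_of_injective _ (Fin.val_injective)]
  have : (univ.filter fun i : Fin n => (i : ℕ) < m).image Fin.val = Finset.range m := by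
    ext x
    simp only [Finset.mem_image, Finset.mem_filter, Finset.mem_univ, true_and, Finset.mem_range]
    constructor
    · rintro ⟨i, hi, rfl⟩; exact hi
    · intro hx; exact ⟨⟨x, by omega⟩, hx, rfl⟩
  rw [this, Finset.card_range]

/-- The number of large values among the first `n` entries is `|E|`. -/
lemma card_filter_F (π : Perm (Fin n)) (E : Finset (Fin n)) :
    (univ.filter fun j : Fin (2 * n) => (j : ℕ) < n ∧ n ≤ (Ffun π E j : ℕ)).card = E.card := by
  have step1 : univ.filter (fun j : Fin (2 * n) => (j : ℕ) < n ∧ n ≤ (Ffun π E j : ℕ))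
      = (univ.filter fun i : Fin n => n ≤ (tfun π E i : ℕ)).image
          (Fin.castLE (by omega : n ≤ 2 * n)) := by
    ext j
    simp only [Finset.mem_image, Finset.mem_filter, Finset.mem_univ, true_and]
    constructor
    · rintro ⟨hjn, hF⟩
      refine ⟨⟨(j : ℕ), hjn⟩, ?_, Fin.ext rfl⟩
      have : Ffun π E j = tfun π E ⟨(j : ℕ), hjn⟩ := dif_pos hjn
      rwa [this] at hF
    · rintro ⟨i, hi, rfl⟩
      refine ⟨i.isLt, ?_⟩
      have : Ffun π E (Fin.castLE (by omega : n ≤ 2 * n) i) = tfun π E i := by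
        rw [Ffun, dif_pos (show ((Fin.castLE (by omega : n ≤ 2*n) i : Fin (2*n)) : ℕ) < n from i.isLt)]
        congr 1
      rwa [this]
  rw [step1, Finset.card_image_of_injective _ (Fin.castLE_injective _)]

  have step2 : univ.filter (fun i : Fin n => n ≤ (tfun π E i : ℕ))
      = (univ.filter fun r : Fin n => n ≤ (r : ℕ) + E.card).image π.symm := by
    ext i
    simp only [Finset.mem_image, Finset.mem_filter, Finset.mem_univ, true_and]
    constructor
    · intro hi
      exact ⟨π i, (tfun_ge_n_iff π E i).mp hi, by simp⟩
    · rintro ⟨r, hr, rfl⟩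
      rw [tfun_ge_n_iff]
      simpa using hr
  rw [step2, Finset.card_image_of_injective _ π.symm.injective]
  have hEn := card_E_le E
  have hnot : univ.filter (fun r : Fin n => n ≤ (r : ℕ) + E.card)
      = Finset.filter (fun i : Fin n => ¬ ((i : ℕ) < n - E.card)) univ := by
    apply Finset.filter_congr; intro i _; constructor <;> intro h <;> omega
  rw [hnot, Finset.filter_not, Finset.card_sdiff_of_subset (Finset.filter_subset _ _),
    card_val_lt (n - E.card) (by omega)]
  simp [Finset.card_univ]
  omega

lemma Ffun_castLE (π : Perm (Fin n)) (E : Finset (Fin n)) (i : Fin n) :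
    Ffun π E (Fin.castLE (by omega : n ≤ 2 * n) i) = tfun π E i := by
  rw [Ffun, dif_pos (show ((Fin.castLE (by omega : n ≤ 2 * n) i : Fin (2 * n)) : ℕ) < n from i.isLt)]
  exact congrArg (tfun π E) (Fin.ext rfl)

lemma tfun_image (π : Perm (Fin n)) (E : Finset (Fin n)) :
    univ.image (tfun π E) = bigV E := by
  ext v
  simp only [Finset.mem_image, Finset.mem_univ, true_and]
  constructor
  · rintro ⟨i, rfl⟩; exact tfun_mem π E i
  · intro hv
    refine ⟨π.symm (((bigV E).orderIsoOfFin (card_bigV E)).symm ⟨v, hv⟩), ?_⟩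
    unfold tfun
    rw [Equiv.apply_symm_apply, OrderIso.apply_symm_apply]

lemma mem_bigV_rev_iff (E : Finset (Fin n)) (c : Fin n) :
    ((Fin.castLE (by omega : n ≤ 2 * n) c).rev ∈ bigV E) ↔ c ∈ E := by
  have hc := c.isLt
  have hrevval : (((Fin.castLE (by omega : n ≤ 2 * n) c) : Fin (2 * n)).rev : ℕ)
      = 2 * n - 1 - (c : ℕ) := by rw [Fin.val_rev]; simp; omega
  constructor
  · intro hm
    obtain ⟨c', -, hc'⟩ := Finset.mem_image.mp hm
    have hc'lt := c'.isLt
    have hval := congrArg Fin.val hc'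
    rw [vfun_val, hrevval] at hval
    split_ifs at hval with h
    · have : c' = c := Fin.ext (by omega)
      subst this; exact h
    · omega
  · intro hcE
    exact Finset.mem_image.mpr ⟨c, Finset.mem_univ c, by rw [vfun, if_pos hcE]⟩

lemma Fperm_inj {π₁ π₂ : Perm (Fin n)} {E₁ E₂ : Finset (Fin n)}
    (h : Fperm π₁ E₁ = Fperm π₂ E₂) : π₁ = π₂ ∧ E₁ = E₂ := by
  have htf : ∀ i : Fin n, tfun π₁ E₁ i = tfun π₂ E₂ i := by
    intro i
    have := congrArg (fun σ : Perm (Fin (2 * n)) => σ (Fin.castLE (by omega : n ≤ 2 * n) i)) h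
    simpa only [Fperm_apply, Ffun_castLE] using this
  have hV : bigV E₁ = bigV E₂ := by
    rw [← tfun_image π₁ E₁, ← tfun_image π₂ E₂]
    exact Finset.image_congr (fun i _ => htf i)
  have hE : E₁ = E₂ := by
    ext c
    rw [← mem_bigV_rev_iff E₁ c, ← mem_bigV_rev_iff E₂ c, hV]
  subst hE
  refine ⟨Equiv.ext fun i => ?_, rfl⟩
  have h2 := htf i
  unfold tfun at h2
  exact ((bigV E₁).orderIsoOfFin (card_bigV E₁)).injective (Subtype.coe_injective h2)

lemma Fperm_surj (τ : Perm (Fin (2 * n))) (hmir : ∀ j : Fin (2 * n), τ j.rev = (τ j).rev) :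
    ∃ π E, Fperm π E = τ := by
  classical
  set tτ : Fin n → Fin (2 * n) := fun i => τ (Fin.castLE (by omega : n ≤ 2 * n) i) with htτ
  have htτinj : Function.Injective tτ := fun a b hab =>
    Fin.castLE_injective _ (τ.injective hab)
  set E : Finset (Fin n) :=
    univ.filter (fun c : Fin n =>
      (Fin.castLE (by omega : n ≤ 2 * n) c).rev ∈ univ.image tτ) with hE
  have hVE : bigV E = univ.image tτ := by
    apply Finset.eq_of_subset_of_card_le
    · intro v hv
      obtain ⟨c, -, rfl⟩ := Finset.mem_image.mp hv
      by_cases hcE : c ∈ E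
      · rw [vfun, if_pos hcE]
        have := Finset.mem_filter.mp (hE ▸ hcE)
        exact this.2
      · rw [vfun, if_neg hcE]
        set j := τ.symm (Fin.castLE (by omega : n ≤ 2 * n) c) with hj
        by_cases hjn : (j : ℕ) < n
        · refine Finset.mem_image.mpr ⟨⟨(j : ℕ), hjn⟩, Finset.mem_univ _, ?_⟩
          have harg : (Fin.castLE (by omega : n ≤ 2 * n) (⟨(j : ℕ), hjn⟩ : Fin n)) = j :=
            Fin.ext rfl
          calc tτ ⟨(j : ℕ), hjn⟩ = τ (Fin.castLE (by omega : n ≤ 2 * n) ⟨(j : ℕ), hjn⟩) := rfl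
            _ = τ j := congrArg τ harg
            _ = Fin.castLE (by omega : n ≤ 2 * n) c := τ.apply_symm_apply _
        · exfalso
          apply hcE
          rw [hE, Finset.mem_filter]
          refine ⟨Finset.mem_univ _, ?_⟩
          have hjrev : (j.rev : ℕ) < n := by
            have := j.isLt; rw [Fin.val_rev]; omega
          refine Finset.mem_image.mpr ⟨⟨(j.rev : ℕ), hjrev⟩, Finset.mem_univ _, ?_⟩
          have harg : (Fin.castLE (by omega : n ≤ 2 * n) (⟨(j.rev : ℕ), hjrev⟩ : Fin n)) = j.rev :=
            Fin.ext rfl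
          calc tτ ⟨(j.rev : ℕ), hjrev⟩
              = τ (Fin.castLE (by omega : n ≤ 2 * n) ⟨(j.rev : ℕ), hjrev⟩) := rfl
            _ = τ j.rev := congrArg τ harg
            _ = (Fin.castLE (by omega : n ≤ 2 * n) c).rev := by
                rw [hmir j]
                exact congrArg Fin.rev (τ.apply_symm_apply _)
    · rw [card_bigV, Finset.card_image_of_injective _ htτinj, card_univ, Fintype.card_fin]
  have hmem : ∀ i : Fin n, tτ i ∈ bigV E := by
    intro i
    rw [hVE]
    exact Finset.mem_image.mpr ⟨i, Finset.mem_univ _, rfl⟩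
  set π₀ : Fin n → Fin n :=
    fun i => ((bigV E).orderIsoOfFin (card_bigV E)).symm ⟨tτ i, hmem i⟩ with hπ₀
  have hπ₀inj : Function.Injective π₀ := by
    intro a b hab
    rw [hπ₀] at hab
    have := congrArg (((bigV E).orderIsoOfFin (card_bigV E))) hab
    rw [OrderIso.apply_symm_apply, OrderIso.apply_symm_apply] at this
    exact htτinj (congrArg Subtype.val this)
  set π : Perm (Fin n) := Equiv.ofBijective π₀ (Finite.injective_iff_bijective.mp hπ₀inj) with hπ
  refine ⟨π, E, ?_⟩
  apply Equiv.ext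
  intro j
  have hj := j.isLt
  rw [Fperm_apply]
  by_cases hjn : (j : ℕ) < n
  · rw [Ffun, dif_pos hjn]
    have hπapp : π ⟨(j : ℕ), hjn⟩ = π₀ ⟨(j : ℕ), hjn⟩ := rfl
    unfold tfun
    rw [hπapp, hπ₀, OrderIso.apply_symm_apply]
    exact congrArg τ (Fin.ext rfl)
  · rw [Ffun, dif_neg hjn]
    have hrevlt : (j.rev : ℕ) < n := by rw [Fin.val_rev]; omega
    have hidx : (⟨2 * n - 1 - (j : ℕ), by omega⟩ : Fin n) = ⟨(j.rev : ℕ), hrevlt⟩ := by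
      apply Fin.ext
      show 2 * n - 1 - (j : ℕ) = (j.rev : ℕ)
      rw [Fin.val_rev]; omega
    have : tfun π E ⟨2 * n - 1 - (j : ℕ), by omega⟩ = τ j.rev := by
      rw [hidx]
      unfold tfun
      have hπapp : π ⟨(j.rev : ℕ), hrevlt⟩ = π₀ ⟨(j.rev : ℕ), hrevlt⟩ := rfl
      rw [hπapp, hπ₀, OrderIso.apply_symm_apply]
      exact congrArg τ (Fin.ext rfl)
    rw [this, hmir j, Fin.rev_rev]

lemma rev_lt_self_iff (w : Fin (2 * n)) : w.rev < w ↔ n ≤ (w : ℕ) := by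
  have hw := w.isLt
  rw [Fin.lt_def, Fin.val_rev]
  omega

/-- The condition for a peak at position `n` of the extended word. -/
def Acond (n : ℕ) (π : Perm (Fin n)) (m : ℕ) : Prop :=
  ∃ h : 2 ≤ n, π ⟨n - 2, by omega⟩ < π ⟨n - 1, by omega⟩ ∧ n ≤ (π ⟨n - 1, by omega⟩ : ℕ) + m

lemma Ffun_mk_eq (π : Perm (Fin n)) (E : Finset (Fin n)) {a : ℕ} (ha : a < n) (ha2 : a < 2 * n) :
    Ffun π E ⟨a, ha2⟩ = tfun π E ⟨a, ha⟩ := by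
  rw [Ffun, dif_pos (show ((⟨a, ha2⟩ : Fin (2 * n)) : ℕ) < n from ha)]

lemma Ffun_mk_lt_iff (π : Perm (Fin n)) (E : Finset (Fin n)) {a b : ℕ}
    (ha : a < n) (hb : b < n) (ha2 : a < 2 * n) (hb2 : b < 2 * n) :
    Ffun π E ⟨a, ha2⟩ < Ffun π E ⟨b, hb2⟩ ↔ π ⟨a, ha⟩ < π ⟨b, hb⟩ := by
  rw [Ffun_mk_eq π E ha ha2, Ffun_mk_eq π E hb hb2, tfun_lt_iff]

lemma Ffun_at_n (π : Perm (Fin n)) (E : Finset (Fin n)) (hn : 2 ≤ n) (h : n < 2 * n) :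
    Ffun π E ⟨n, h⟩ = (tfun π E ⟨n - 1, by omega⟩).rev := by
  rw [Ffun, dif_neg (show ¬ ((⟨n, h⟩ : Fin (2 * n)) : ℕ) < n from by simp)]
  exact congrArg Fin.rev (congrArg (tfun π E) (Fin.ext (by show 2 * n - 1 - n = n - 1; omega)))

lemma not_isPeak_n (π : Perm (Fin n)) : ¬ IsPeak π n := fun ⟨⟨_, h⟩, _⟩ => lt_irrefl n h

lemma isPeakHat_iff (hn : 2 ≤ n) (π : Perm (Fin n)) (E : Finset (Fin n)) (i : ℕ) :
    IsPeakHat n (Fperm π E) i ↔ (IsPeak π i ∨ (i = n ∧ Acond n π E.card)) := by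
  constructor
  · rintro ⟨⟨h1, h2⟩, hc1, hc2⟩
    by_cases hin : i = n
    · simp only [hin] at hc1 hc2
      right
      refine ⟨hin, hn, ?_, ?_⟩
      · exact (Ffun_mk_lt_iff π E (by omega) (by omega) (by omega) (by omega)).mp hc1
      · have hc2' : Ffun π E ⟨n, by omega⟩ < Ffun π E ⟨n - 1, by omega⟩ := hc2
        rw [Ffun_at_n π E hn, Ffun_mk_eq π E (show n - 1 < n by omega)] at hc2'
        exact (tfun_ge_n_iff π E _).mp ((rev_lt_self_iff _).mp hc2')
    · left
      refine ⟨⟨h1, by omega⟩, ?_, ?_⟩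
      · exact (Ffun_mk_lt_iff π E (by omega) (by omega) (by omega) (by omega)).mp hc1
      · exact (Ffun_mk_lt_iff π E (by omega) (by omega) (by omega) (by omega)).mp hc2
  · rintro (⟨⟨h1, h2⟩, hc1, hc2⟩ | ⟨hin, h2n, hc1, hc2⟩)
    · refine ⟨⟨h1, by omega⟩, ?_, ?_⟩
      · exact (Ffun_mk_lt_iff π E (by omega) (by omega) (by omega) (by omega)).mpr hc1
      · exact (Ffun_mk_lt_iff π E (by omega) (by omega) (by omega) (by omega)).mpr hc2
    · rw [hin]
      refine ⟨⟨by omega, le_refl n⟩, ?_, ?_⟩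
      · exact (Ffun_mk_lt_iff π E (by omega) (by omega) (by omega) (by omega)).mpr hc1
      · show Ffun π E ⟨n, by omega⟩ < Ffun π E ⟨n - 1, by omega⟩
        rw [Ffun_at_n π E hn, Ffun_mk_eq π E (show n - 1 < n by omega)]
        exact (rev_lt_self_iff _).mpr ((tfun_ge_n_iff π E _).mpr hc2)

lemma Fperm_mem_hatPD (hn : 2 ≤ n) (S' : Finset ℕ) (π : Perm (Fin n)) (E : Finset (Fin n))
    (hE : Even E.card)
    (hcond : ∀ i : ℕ, (IsPeak π i ∨ (i = n ∧ Acond n π E.card)) ↔ i ∈ S') :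
    Fperm π E ∈ hatPD n S' := by
  constructor
  · constructor
    · exact fun j => Ffun_mirror π E j
    · have hcf : (univ.filter fun j : Fin (2 * n) =>
          (j : ℕ) < n ∧ n ≤ ((Fperm π E) j : ℕ)).card = E.card := card_filter_F π E
      rw [hcf]
      exact hE
  · intro i
    exact (isPeakHat_iff hn π E i).trans (hcond i)

lemma ncard_hatPD (hn : 2 ≤ n) (S' : Finset ℕ) :
    (hatPD n S').ncard = Nat.card {pE : Perm (Fin n) × Finset (Fin n) //
      Even pE.2.card ∧ ∀ i : ℕ, (IsPeak pE.1 i ∨ (i = n ∧ Acond n pE.1 pE.2.card)) ↔ i ∈ S'} := by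
  rw [← Nat.card_coe_set_eq]
  refine (Nat.card_congr (Equiv.ofBijective
    (fun x : {pE : Perm (Fin n) × Finset (Fin n) // Even pE.2.card ∧
        ∀ i : ℕ, (IsPeak pE.1 i ∨ (i = n ∧ Acond n pE.1 pE.2.card)) ↔ i ∈ S'} =>
      (⟨Fperm x.1.1 x.1.2, Fperm_mem_hatPD hn S' x.1.1 x.1.2 x.2.1 x.2.2⟩ : ↥(hatPD n S')))
    ⟨?_, ?_⟩)).symm
  · intro a b hab
    obtain ⟨h1, h2⟩ := Fperm_inj (Subtype.ext_iff.mp hab)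
    exact Subtype.ext (Prod.ext h1 h2)
  · rintro ⟨τ, hτ⟩
    obtain ⟨⟨hmir, hpar⟩, hpeaks⟩ := hτ
    obtain ⟨π, E, rfl⟩ := Fperm_surj τ hmir
    have hEeven : Even E.card := by
      have hcf : (univ.filter fun j : Fin (2 * n) =>
          (j : ℕ) < n ∧ n ≤ ((Fperm π E) j : ℕ)).card = E.card := card_filter_F π E
      rw [← hcf]
      exact hpar
    exact ⟨⟨(π, E), hEeven, fun i => (isPeakHat_iff hn π E i).symm.trans (hpeaks i)⟩,
      Subtype.ext rfl⟩

lemma ncard_eq_filter_card {α : Type*} [Fintype α] (p : α → Prop) [DecidablePred p] :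
    Nat.card {x // p x} = (univ.filter p).card := by
  simp [Nat.card_eq_fintype_card, Fintype.card_subtype]

lemma prod_count {α β : Type*} [Fintype α] [Fintype β] [DecidableEq α] [DecidableEq β]
    (p : α × β → Prop) [DecidablePred p] :
    (univ.filter p).card = ∑ a ∈ univ, (univ.filter fun b => p (a, b)).card := by
  rw [Finset.card_eq_sum_card_fiberwise (f := Prod.fst) (t := univ) (fun x _ => mem_univ _)]
  apply Finset.sum_congr rfl
  intro a _
  have himg : Finset.filter (fun x => Prod.fst x = a) (univ.filter p)
      = (univ.filter fun b => p (a, b)).image (fun b => (a, b)) := by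
    ext x
    simp only [Finset.mem_filter, Finset.mem_image, Finset.mem_univ, true_and]
    constructor
    · rintro ⟨hp, h1⟩
      exact ⟨x.2, by rwa [show ((a, x.2) : α × β) = x from Prod.ext h1.symm rfl],
        Prod.ext h1.symm rfl⟩
    · rintro ⟨b, hb, rfl⟩
      exact ⟨hb, rfl⟩
  rw [himg]
  exact Finset.card_image_of_injective _ (fun b₁ b₂ h => congrArg Prod.snd h)

lemma card_by_size (p : ℕ → Prop) [DecidablePred p] :
    (univ.filter fun E : Finset (Fin n) => p E.card).card
      = ∑ i ∈ Finset.range (n + 1), if p i then n.choose i else 0 := by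
  rw [Finset.card_eq_sum_card_fiberwise (f := Finset.card) (t := Finset.range (n + 1))
    (fun E _ => Finset.mem_range.mpr (Nat.lt_succ_of_le (card_E_le E)))]
  apply Finset.sum_congr rfl
  intro i _
  rw [Finset.filter_filter]
  by_cases hp : p i
  · rw [if_pos hp]
    have h1 : univ.filter (fun E : Finset (Fin n) => p E.card ∧ E.card = i)
        = univ.filter (fun E => E.card = i) := by
      apply Finset.filter_congr
      intro E _
      exact ⟨And.right, fun h => ⟨h ▸ hp, h⟩⟩
    have h2 : univ.filter (fun E : Finset (Fin n) => E.card = i)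
        = Finset.powersetCard i univ := by
      rw [Finset.powersetCard_eq_filter, Finset.powerset_univ]
    rw [h1, h2, Finset.card_powersetCard, card_univ, Fintype.card_fin]
  · rw [if_neg hp, Finset.card_eq_zero, Finset.filter_eq_empty_iff]
    rintro E - ⟨h1, h2⟩
    exact hp (h2 ▸ h1)

/-- Sum of binomials over even `i` with `i ≥ m`. -/
def Bsum (n m : ℕ) : ℕ :=
  ∑ i ∈ Finset.range (n + 1), if Even i ∧ m ≤ i then n.choose i else 0

/-- Sum of binomials over even `i`. -/
def Esum (n : ℕ) : ℕ := ∑ i ∈ Finset.range (n + 1), if Even i then n.choose i else 0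

lemma Esum_eq {n : ℕ} (hodd : Odd n) : Esum n = 2 ^ (n - 1) := by
  have h1 : Esum n = ∑ i ∈ Finset.range (n + 1), if Odd i then n.choose i else 0 := by
    rw [Esum, ← Finset.sum_range_reflect]
    apply Finset.sum_congr rfl
    intro i hi
    have hi' : i ≤ n := by have := Finset.mem_range.mp hi; omega
    have hred : n + 1 - 1 - i = n - i := by omega
    rw [hred, Nat.choose_symm hi']
    by_cases hoi : Odd i
    · have he : Even (n - i) := by
        rw [Nat.even_iff]; rw [Nat.odd_iff] at hoi hodd; omega
      rw [if_pos he, if_pos hoi]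
    · have he : ¬ Even (n - i) := by
        rw [Nat.even_iff]; rw [Nat.odd_iff] at hodd; rw [Nat.odd_iff] at hoi
        omega
      rw [if_neg he, if_neg hoi]
  have h2 : Esum n + Esum n = 2 ^ n := by
    nth_rewrite 2 [h1]
    rw [Esum, ← Finset.sum_add_distrib, ← Nat.sum_range_choose n]
    apply Finset.sum_congr rfl
    intro i _
    by_cases h : Even i
    · rw [if_pos h, if_neg (by rw [Nat.odd_iff]; rw [Nat.even_iff] at h; omega), Nat.add_zero]
    · rw [if_neg h, if_pos (by rw [Nat.odd_iff]; rw [Nat.even_iff] at h; omega), Nat.zero_add]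
  have h3 : 2 ^ n = 2 ^ (n - 1) * 2 := by
    have hn1 : n - 1 + 1 = n := by
      obtain ⟨t, rfl⟩ := hodd; omega
    conv_lhs => rw [← hn1]
    rw [pow_succ]
  omega

lemma Phi_le (N k : ℕ) : Phi N k ≤ 2 ^ N := by
  rw [Phi, ← Nat.sum_range_choose N]
  apply Finset.sum_le_sum_of_subset
  intro i hi
  rw [Finset.mem_Icc] at hi
  rw [Finset.mem_range]
  omega

lemma Phi_step {N k : ℕ} (h : k ≤ N) : Phi N k = N.choose k + Phi N (k + 1) := by
  rw [Phi, Phi, show Finset.Icc k N = insert k (Finset.Icc (k + 1) N) from by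
    ext x; rw [Finset.mem_insert, Finset.mem_Icc, Finset.mem_Icc]; omega]
  rw [Finset.sum_insert (by rw [Finset.mem_Icc]; omega)]

lemma Phi_empty {N k : ℕ} (h : N < k) : Phi N k = 0 := by
  rw [Phi, Finset.Icc_eq_empty (by omega), Finset.sum_empty]

lemma Bsum_zero {n m : ℕ} (h : n < m) : Bsum n m = 0 := by
  rw [Bsum]
  apply Finset.sum_eq_zero
  intro i hi
  rw [Finset.mem_range] at hi
  rw [if_neg]
  rintro ⟨-, hle⟩
  omega

lemma Bsum_odd_shift {n m : ℕ} (hm : ¬ Even m) : Bsum n m = Bsum n (m + 1) := by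
  apply Finset.sum_congr rfl
  intro i _
  apply if_congr _ rfl rfl
  constructor
  · rintro ⟨he, hle⟩
    refine ⟨he, ?_⟩
    rw [Nat.even_iff] at he hm
    omega
  · rintro ⟨he, hle⟩
    exact ⟨he, by omega⟩

lemma Bsum_even {n : ℕ} (hodd : Odd n) :
    ∀ d m, Even m → 1 ≤ m → n + 1 ≤ m + d → Bsum n m = Phi (n - 1) (m - 1) := by
  intro d
  induction d with
  | zero =>
    intro m _ hm1 hbound
    have hnp : 1 ≤ n := hodd.pos
    rw [Bsum_zero (show n < m by omega), Phi_empty (show n - 1 < m - 1 by omega)]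
  | succ d ih =>
    intro m hme hm1 hbound
    have hnp : 1 ≤ n := hodd.pos
    by_cases hmn : n < m
    · rw [Bsum_zero hmn, Phi_empty (show n - 1 < m - 1 by omega)]
    · have hm_le : m ≤ n - 1 := by
        rw [Nat.even_iff] at hme
        rw [Nat.odd_iff] at hodd
        omega
      have hstep : Bsum n m = n.choose m + Bsum n (m + 2) := by
        have hptwise : ∀ i ∈ Finset.range (n + 1),
            (if Even i ∧ m ≤ i then n.choose i else 0)
              = (if i = m then n.choose i else 0)
                + (if Even i ∧ m + 2 ≤ i then n.choose i else 0) := by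
          intro i _
          by_cases h1 : i = m
          · subst h1
            rw [if_pos ⟨hme, le_refl _⟩, if_pos rfl, if_neg (by rintro ⟨-, h⟩; omega),
              Nat.add_zero]
          · rw [if_neg h1, Nat.zero_add]
            apply if_congr _ rfl rfl
            constructor
            · rintro ⟨he, hle⟩
              refine ⟨he, ?_⟩
              rw [Nat.even_iff] at he hme
              omega
            · rintro ⟨he, hle⟩
              exact ⟨he, by omega⟩
        rw [Bsum, Finset.sum_congr rfl hptwise, Finset.sum_add_distrib,
          Finset.sum_ite_eq' (Finset.range (n + 1)) m (fun i => n.choose i),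
          if_pos (Finset.mem_range.mpr (by omega))]
        rfl
      have hpascal : n.choose m = (n - 1).choose (m - 1) + (n - 1).choose m := by
        have hn1 : n - 1 + 1 = n := by omega
        have hm1' : m - 1 + 1 = m := by omega
        calc n.choose m = ((n - 1) + 1).choose ((m - 1) + 1) := by rw [hn1, hm1']
          _ = (n - 1).choose (m - 1) + (n - 1).choose ((m - 1) + 1) := Nat.choose_succ_succ _ _
          _ = (n - 1).choose (m - 1) + (n - 1).choose m := by rw [hm1']
      have hih : Bsum n (m + 2) = Phi (n - 1) (m + 1) :=
        ih (m + 2) (by rw [Nat.even_iff] at hme ⊢; omega) (by omega) (by omega)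
      have hm1' : m - 1 + 1 = m := by omega
      rw [hstep, hih, Phi_step (show m - 1 ≤ n - 1 by omega), hm1',
        Phi_step (show m ≤ n - 1 from hm_le)]
      omega

lemma Phi_reflect {N a : ℕ} (ha : 1 ≤ a) (haN : a ≤ N) :
    Phi N (N + 1 - a) + Phi N a = 2 ^ N := by
  have h1 : Phi N (N + 1 - a) = ∑ j ∈ Finset.range a, N.choose j := by
    rw [Phi]
    apply Finset.sum_nbij' (i := fun i => N - i) (j := fun j => N - j)
    · intro x hx
      rw [Finset.mem_Icc] at hx
      rw [Finset.mem_range]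
      omega
    · intro x hx
      rw [Finset.mem_range] at hx
      rw [Finset.mem_Icc]
      omega
    · intro x hx
      rw [Finset.mem_Icc] at hx
      omega
    · intro x hx
      rw [Finset.mem_range] at hx
      omega
    · intro x hx
      rw [Finset.mem_Icc] at hx
      rw [Nat.choose_symm (by omega)]
  have h2 : Phi N a = ∑ j ∈ Finset.Ico a (N + 1), N.choose j := by
    rw [Phi, Finset.Ico_add_one_right_eq_Icc]
  rw [h1, h2, Finset.range_eq_Ico]
  rw [Finset.sum_Ico_consecutive _ (by omega : 0 ≤ a) (by omega : a ≤ N + 1)]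
  rw [← Finset.range_eq_Ico, Nat.sum_range_choose]

attribute [local instance 10] Classical.propDecidable

lemma ncard_set_eq_filter {α : Type*} [Fintype α] (s : Set α) [DecidablePred (· ∈ s)] :
    s.ncard = (univ.filter (· ∈ s)).card := by
  rw [← Nat.card_coe_set_eq]
  exact ncard_eq_filter_card _

lemma ascTo_card (hn : 3 ≤ n) (S : Finset ℕ) (v : ℕ) :
    (ascTo n S v).ncard = (univ.filter fun π : Perm (Fin n) =>
      ((∀ i : ℕ, IsPeak π i ↔ i ∈ S) ∧
        (π ⟨n - 2, by omega⟩ < π ⟨n - 1, by omega⟩ ∧ ((π ⟨n - 1, by omega⟩ : ℕ) + 1 = v)))).card := by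
  classical
  rw [ncard_set_eq_filter]
  congr 1
  apply Finset.filter_congr
  intro π _
  show π ∈ ascTo n S v ↔ _
  unfold ascTo peakSetEq EndsAscentTo
  simp only [Set.mem_setOf_eq]
  constructor
  · rintro ⟨hpk, h2, hlt, hval⟩
    exact ⟨hpk, hlt, hval⟩
  · rintro ⟨hpk, hlt, hval⟩
    exact ⟨hpk, by omega, hlt, hval⟩

lemma underlineP_card (hn : 3 ≤ n) (S : Finset ℕ) :
    (underlineP n S).ncard = (univ.filter fun π : Perm (Fin n) =>
      ((∀ i : ℕ, IsPeak π i ↔ i ∈ S) ∧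
        π ⟨n - 1, by omega⟩ < π ⟨n - 2, by omega⟩)).card := by
  classical
  rw [ncard_set_eq_filter]
  congr 1
  apply Finset.filter_congr
  intro π _
  show π ∈ underlineP n S ↔ _
  unfold underlineP peakSetEq EndsDescent
  simp only [Set.mem_setOf_eq]
  constructor
  · rintro ⟨hpk, h2, hlt⟩
    exact ⟨hpk, hlt⟩
  · rintro ⟨hpk, hlt⟩
    exact ⟨hpk, by omega, hlt⟩

lemma cond_simp (hn : 3 ≤ n) (S : Finset ℕ) (hS : ∀ x ∈ S, 0 < x ∧ x < n)
    (π : Perm (Fin n)) (m : ℕ) (b : Prop) (S' : Finset ℕ)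
    (hS' : ∀ i : ℕ, i ∈ S' ↔ (i ∈ S ∨ (b ∧ i = n))) :
    (∀ i : ℕ, (IsPeak π i ∨ (i = n ∧ Acond n π m)) ↔ i ∈ S')
      ↔ ((∀ i : ℕ, IsPeak π i ↔ i ∈ S) ∧ (Acond n π m ↔ b)) := by
  constructor
  · intro H
    constructor
    · intro i
      by_cases hin : i = n
      · rw [hin]
        exact iff_of_false (not_isPeak_n π) (fun hmem => lt_irrefl n (hS n hmem).2)
      · have hi := H i
        rw [hS' i] at hi
        constructor
        · intro hp
          rcases hi.mp (Or.inl hp) with h | ⟨-, hn'⟩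
          · exact h
          · exact absurd hn' hin
        · intro hs
          rcases hi.mpr (Or.inl hs) with h | ⟨hn', -⟩
          · exact h
          · exact absurd hn' hin
    · have hn' := H n
      rw [hS' n] at hn'
      constructor
      · intro hA
        rcases hn'.mp (Or.inr ⟨rfl, hA⟩) with h | ⟨hb, -⟩
        · exact absurd (hS n h).2 (lt_irrefl n)
        · exact hb
      · intro hb
        rcases hn'.mpr (Or.inr ⟨hb, rfl⟩) with h | ⟨-, hA⟩
        · exact absurd h (not_isPeak_n π)
        · exact hA
  · rintro ⟨h1, h2⟩ i
    rw [hS' i]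
    constructor
    · rintro (hp | ⟨hin, hA⟩)
      · exact Or.inl ((h1 i).mp hp)
      · exact Or.inr ⟨h2.mp hA, hin⟩
    · rintro (hs | ⟨hb, hin⟩)
      · exact Or.inl ((h1 i).mpr hs)
      · exact Or.inr ⟨hin, h2.mpr hb⟩

lemma count_pairs (hn : 3 ≤ n) (S : Finset ℕ) (hS : ∀ x ∈ S, 0 < x ∧ x < n) (b : Prop)
    (S' : Finset ℕ) (hS' : ∀ i : ℕ, i ∈ S' ↔ (i ∈ S ∨ (b ∧ i = n))) :
    (hatPD n S').ncard
      = (∑ v ∈ Finset.Icc 2 n, (ascTo n S v).ncard *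
          (univ.filter fun E : Finset (Fin n) =>
            Even E.card ∧ ((n - v + 1 ≤ E.card) ↔ b)).card)
        + (underlineP n S).ncard *
          (univ.filter fun E : Finset (Fin n) => Even E.card ∧ (False ↔ b)).card := by
  classical
  rw [ncard_hatPD (by omega : 2 ≤ n) S', ncard_eq_filter_card, prod_count]
  have hinner : ∀ π : Perm (Fin n),
      (univ.filter fun E : Finset (Fin n) =>
        Even E.card ∧ ∀ i : ℕ, ((IsPeak π i ∨ (i = n ∧ Acond n π E.card)) ↔ i ∈ S')).card
      = (univ.filter fun E : Finset (Fin n) =>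
        Even E.card ∧ ((∀ i : ℕ, IsPeak π i ↔ i ∈ S) ∧ (Acond n π E.card ↔ b))).card := by
    intro π
    congr 1
    apply Finset.filter_congr
    intro E _
    exact and_congr Iff.rfl (cond_simp hn S hS π E.card b S' hS')
  rw [Finset.sum_congr rfl (fun π _ => hinner π)]
  set Pk : Perm (Fin n) → Prop := fun π => ∀ i : ℕ, IsPeak π i ↔ i ∈ S with hPk
  set asc : Perm (Fin n) → Prop :=
    fun π => π ⟨n - 2, by omega⟩ < π ⟨n - 1, by omega⟩ with hasc
  set dsc : Perm (Fin n) → Prop :=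
    fun π => π ⟨n - 1, by omega⟩ < π ⟨n - 2, by omega⟩ with hdsc
  set f : Perm (Fin n) → ℕ := fun π => (univ.filter fun E : Finset (Fin n) =>
    Even E.card ∧ (Pk π ∧ (Acond n π E.card ↔ b))).card with hf
  have htri : ∀ π : Perm (Fin n), asc π ∨ dsc π := by
    intro π
    have hne : π ⟨n - 2, by omega⟩ ≠ π ⟨n - 1, by omega⟩ := by
      intro h
      have h1 := π.injective h
      have h2 : n - 2 = n - 1 := congrArg Fin.val h1
      omega
    rcases lt_or_gt_of_ne hne with h | h
    · exact Or.inl h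
    · exact Or.inr h
  have hAcond_asc : ∀ (π : Perm (Fin n)) (m : ℕ), asc π →
      (Acond n π m ↔ (n - ((π ⟨n - 1, by omega⟩ : ℕ) + 1) + 1 ≤ m)) := by
    intro π m ha
    have hval := (π ⟨n - 1, by omega⟩).isLt
    constructor
    · rintro ⟨hn2, ha2, hle⟩
      have hle' : n ≤ ((π ⟨n - 1, by omega⟩ : Fin n) : ℕ) + m := hle
      omega
    · intro hle
      refine ⟨by omega, ha, ?_⟩
      show n ≤ ((π ⟨n - 1, by omega⟩ : Fin n) : ℕ) + m
      omega
  have hAcond_dsc : ∀ (π : Perm (Fin n)) (m : ℕ), dsc π → ¬ Acond n π m := by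
    intro π m hd hA
    obtain ⟨hn2, hlt, hle⟩ := hA
    exact absurd hlt (not_lt_of_gt hd)
  -- split the sum
  rw [← Finset.sum_filter_add_sum_filter_not univ (fun π => Pk π ∧ asc π) f]
  -- descent-or-junk part
  have hrest : ∑ π ∈ univ.filter (fun π => ¬ (Pk π ∧ asc π)), f π
      = (underlineP n S).ncard *
        (univ.filter fun E : Finset (Fin n) => Even E.card ∧ (False ↔ b)).card := by
    rw [← Finset.sum_filter_add_sum_filter_not (univ.filter (fun π => ¬ (Pk π ∧ asc π)))
      (fun π => Pk π ∧ dsc π) f]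
    have hjunk : ∑ π ∈ (univ.filter (fun π => ¬ (Pk π ∧ asc π))).filter
        (fun π => ¬ (Pk π ∧ dsc π)), f π = 0 := by
      apply Finset.sum_eq_zero
      intro π hπ
      rw [Finset.mem_filter, Finset.mem_filter] at hπ
      obtain ⟨⟨-, h1⟩, h2⟩ := hπ
      have hnPk : ¬ Pk π := by
        rcases htri π with h | h
        · exact fun hp => h1 ⟨hp, h⟩
        · exact fun hp => h2 ⟨hp, h⟩
      simp only [hf]
      rw [Finset.card_eq_zero, Finset.filter_eq_empty_iff]
      rintro E - ⟨-, hPkE, -⟩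
      exact hnPk hPkE
    rw [hjunk, Nat.add_zero]
    have hdesc_f : ∀ π ∈ (univ.filter (fun π => ¬ (Pk π ∧ asc π))).filter
        (fun π => Pk π ∧ dsc π), f π
        = (univ.filter fun E : Finset (Fin n) => Even E.card ∧ (False ↔ b)).card := by
      intro π hπ
      rw [Finset.mem_filter] at hπ
      obtain ⟨-, hPkπ, hdscπ⟩ := hπ
      simp only [hf]
      congr 1
      apply Finset.filter_congr
      intro E _
      apply and_congr Iff.rfl
      constructor
      · rintro ⟨-, hA⟩
        exact ⟨fun hfalse => hfalse.elim, fun hb =>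
          absurd (hA.mpr hb) (hAcond_dsc π E.card hdscπ)⟩
      · intro hFb
        exact ⟨hPkπ, fun hA => absurd hA (hAcond_dsc π E.card hdscπ),
          fun hb => (hFb.mpr hb).elim⟩
    rw [Finset.sum_congr rfl hdesc_f, Finset.sum_const, smul_eq_mul]
    congr 1
    rw [underlineP_card hn S]
    congr 1
    rw [Finset.filter_filter]
    apply Finset.filter_congr
    intro π _
    constructor
    · rintro ⟨-, hPkπ, hdscπ⟩
      exact ⟨hPkπ, hdscπ⟩
    · rintro ⟨hPkπ, hdscπ⟩
      exact ⟨fun hconj => absurd hconj.2 (not_lt_of_gt hdscπ), hPkπ, hdscπ⟩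
  rw [hrest]
  congr 1
  -- ascent part
  have hasc_f : ∀ π ∈ univ.filter (fun π => Pk π ∧ asc π), f π
      = (univ.filter fun E : Finset (Fin n) =>
          Even E.card ∧ ((n - ((π ⟨n - 1, by omega⟩ : ℕ) + 1) + 1 ≤ E.card) ↔ b)).card := by
    intro π hπ
    rw [Finset.mem_filter] at hπ
    obtain ⟨-, hPkπ, hascπ⟩ := hπ
    simp only [hf]
    congr 1
    apply Finset.filter_congr
    intro E _
    apply and_congr Iff.rfl
    constructor
    · rintro ⟨-, hA⟩
      rw [← hAcond_asc π E.card hascπ]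
      exact hA
    · intro hA
      refine ⟨hPkπ, ?_⟩
      rw [hAcond_asc π E.card hascπ]
      exact hA
  rw [Finset.sum_congr rfl hasc_f]
  have hmaps : ∀ π ∈ univ.filter (fun π => Pk π ∧ asc π),
      ((π ⟨n - 1, by omega⟩ : ℕ) + 1) ∈ Finset.Icc 2 n := by
    intro π hπ
    rw [Finset.mem_filter] at hπ
    obtain ⟨-, -, hascπ⟩ := hπ
    rw [Finset.mem_Icc]
    have h1 := (π ⟨n - 1, by omega⟩).isLt
    have h2 : (π ⟨n - 2, by omega⟩ : ℕ) < (π ⟨n - 1, by omega⟩ : ℕ) := hascπ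
    omega
  rw [← Finset.sum_fiberwise_of_maps_to hmaps]
  apply Finset.sum_congr rfl
  intro v hv
  rw [ascTo_card hn S v]
  rw [Finset.filter_filter]
  have hconst : ∀ π ∈ univ.filter (fun π => (Pk π ∧ asc π) ∧ (π ⟨n - 1, by omega⟩ : ℕ) + 1 = v),
      (univ.filter fun E : Finset (Fin n) =>
        Even E.card ∧ ((n - ((π ⟨n - 1, by omega⟩ : ℕ) + 1) + 1 ≤ E.card) ↔ b)).card
      = (univ.filter fun E : Finset (Fin n) =>
        Even E.card ∧ ((n - v + 1 ≤ E.card) ↔ b)).card := by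
    intro π hπ
    rw [Finset.mem_filter] at hπ
    obtain ⟨-, -, hval⟩ := hπ
    rw [hval]
  rw [Finset.sum_congr rfl hconst, Finset.sum_const, smul_eq_mul]
  congr 1
  congr 1
  apply Finset.filter_congr
  intro π _
  constructor
  · rintro ⟨⟨hPkπ, hascπ⟩, hval⟩
    exact ⟨hPkπ, hascπ, hval⟩
  · rintro ⟨hPkπ, hascπ, hval⟩
    exact ⟨⟨hPkπ, hascπ⟩, hval⟩

lemma count_ge (m : ℕ) :
    (univ.filter fun E : Finset (Fin n) => Even E.card ∧ ((m ≤ E.card) ↔ True)).card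
      = Bsum n m := by
  rw [card_by_size (fun c => Even c ∧ ((m ≤ c) ↔ True)), Bsum]
  apply Finset.sum_congr rfl
  intro i _
  apply if_congr _ rfl rfl
  exact and_congr Iff.rfl ⟨fun h => h.mpr trivial, fun h => iff_of_true h trivial⟩

lemma count_lt (m : ℕ) :
    (univ.filter fun E : Finset (Fin n) => Even E.card ∧ ((m ≤ E.card) ↔ False)).card
      + Bsum n m = Esum n := by
  rw [card_by_size (fun c => Even c ∧ ((m ≤ c) ↔ False)), Bsum, Esum,
    ← Finset.sum_add_distrib]
  apply Finset.sum_congr rfl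
  intro i _
  by_cases he : Even i
  · by_cases hm : m ≤ i
    · rw [if_neg (fun h => (h.2.mp hm).elim), if_pos ⟨he, hm⟩, if_pos he, Nat.zero_add]
    · rw [if_pos ⟨he, iff_of_false hm (fun h => h)⟩, if_neg (fun h => hm h.2), if_pos he,
        Nat.add_zero]
  · rw [if_neg (fun h => he h.1), if_neg (fun h => he h.1), if_neg he, Nat.add_zero]

lemma count_all :
    (univ.filter fun E : Finset (Fin n) => Even E.card ∧ (False ↔ False)).card = Esum n := by
  rw [card_by_size (fun c => Even c ∧ (False ↔ False)), Esum]
  apply Finset.sum_congr rfl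
  intro i _
  apply if_congr _ rfl rfl
  exact and_iff_left Iff.rfl

lemma count_none :
    (univ.filter fun E : Finset (Fin n) => Even E.card ∧ (False ↔ True)).card = 0 := by
  rw [Finset.card_eq_zero, Finset.filter_eq_empty_iff]
  rintro E - ⟨-, h⟩
  exact h.mpr trivial

lemma coefPsi {n : ℕ} (hodd : Odd n) (hn : 3 ≤ n) (v : ℕ) (hv2 : 2 ≤ v) (hvn : v ≤ n) :
    Bsum n (n - v + 1) = Psi (n - 1) (2 * (v / 2)) := by
  have hnodd := hodd
  rw [Nat.odd_iff] at hnodd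
  rcases Nat.even_or_odd v with hve | hvo
  · have hve' := hve
    rw [Nat.even_iff] at hve'
    have hm_even : Even (n - v + 1) := by rw [Nat.even_iff]; omega
    have h1 : Bsum n (n - v + 1) = Phi (n - 1) (n - v + 1 - 1) :=
      Bsum_even hodd (n + 1) _ hm_even (by omega) (by omega)
    have h2 : n - v + 1 - 1 = (n - 1) + 1 - v := by omega
    have hrefl := Phi_reflect (show 1 ≤ v by omega) (show v ≤ n - 1 by omega)
    have h4 : 2 * (v / 2) = v := by omega
    rw [h1, h2, Psi, h4]
    have hle := Phi_le (n - 1) v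
    omega
  · have hvo' := hvo
    rw [Nat.odd_iff] at hvo'
    have hm_odd : ¬ Even (n - v + 1) := by rw [Nat.even_iff]; omega
    rw [Bsum_odd_shift hm_odd]
    have hm_even : Even (n - v + 1 + 1) := by rw [Nat.even_iff]; omega
    have h1 : Bsum n (n - v + 1 + 1) = Phi (n - 1) (n - v + 1 + 1 - 1) :=
      Bsum_even hodd (n + 1) _ hm_even (by omega) (by omega)
    have h2 : n - v + 1 + 1 - 1 = (n - 1) + 1 - (v - 1) := by omega
    have hrefl := Phi_reflect (show 1 ≤ v - 1 by omega) (show v - 1 ≤ n - 1 by omega)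
    have h4 : 2 * (v / 2) = v - 1 := by omega
    rw [h1, h2, Psi, h4]
    have hle := Phi_le (n - 1) (v - 1)
    omega

lemma coefPhi {n : ℕ} (hodd : Odd n) (hn : 3 ≤ n) (v : ℕ) (hv2 : 2 ≤ v) (hvn : v ≤ n) :
    (univ.filter fun E : Finset (Fin n) =>
        Even E.card ∧ ((n - v + 1 ≤ E.card) ↔ False)).card = Phi (n - 1) (2 * (v / 2)) := by
  have h1 := count_lt (n := n) (n - v + 1)
  have h2 := coefPsi hodd hn v hv2 hvn
  have h3 := Esum_eq hodd
  have h4 : Psi (n - 1) (2 * (v / 2)) = 2 ^ (n - 1) - Phi (n - 1) (2 * (v / 2)) := rfl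
  have h5 := Phi_le (n - 1) (2 * (v / 2))
  omega

lemma reindex {n : ℕ} (hodd : Odd n) (hn : 3 ≤ n) (a : ℕ → ℕ) (F : ℕ → ℕ) :
    ∑ v ∈ Finset.Icc 2 n, a v * F (2 * (v / 2))
      = ∑ k ∈ Finset.Icc 1 ((n - 1) / 2), (a (2 * k + 1) + a (2 * k)) * F (2 * k) := by
  have hnodd := hodd
  rw [Nat.odd_iff] at hnodd
  have hsplit : Finset.Icc 2 n
      = ((Finset.Icc 1 ((n - 1) / 2)).image (fun k => 2 * k))
        ∪ ((Finset.Icc 1 ((n - 1) / 2)).image (fun k => 2 * k + 1)) := by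
    ext x
    simp only [Finset.mem_union, Finset.mem_image, Finset.mem_Icc]
    constructor
    · rintro ⟨h2, hxn⟩
      rcases Nat.even_or_odd x with hx | hx
      · rw [Nat.even_iff] at hx
        exact Or.inl ⟨x / 2, ⟨by omega, by omega⟩, by omega⟩
      · rw [Nat.odd_iff] at hx
        exact Or.inr ⟨x / 2, ⟨by omega, by omega⟩, by omega⟩
    · rintro (⟨k, ⟨hk1, hk2⟩, rfl⟩ | ⟨k, ⟨hk1, hk2⟩, rfl⟩) <;> omega
  have hdisj : Disjoint ((Finset.Icc 1 ((n - 1) / 2)).image (fun k => 2 * k))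
      ((Finset.Icc 1 ((n - 1) / 2)).image (fun k => 2 * k + 1)) := by
    rw [Finset.disjoint_left]
    intro x hx1 hx2
    rw [Finset.mem_image] at hx1 hx2
    obtain ⟨k1, -, h1⟩ := hx1
    obtain ⟨k2, -, h2⟩ := hx2
    omega
  rw [hsplit, Finset.sum_union hdisj,
    Finset.sum_image (fun x _ y _ h => by omega),
    Finset.sum_image (fun x _ y _ h => by omega),
    ← Finset.sum_add_distrib]
  apply Finset.sum_congr rfl
  intro k hk
  have h1 : 2 * k / 2 = k := by omega
  have h2 : (2 * k + 1) / 2 = k := by omega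
  rw [h1, h2]
  ring

lemma filtercard_eq_ncard {α : Type*} [Fintype α] (p : α → Prop) [DecidablePred p] :
    (univ.filter p).card = {x | p x}.ncard := by
  rw [← Nat.card_coe_set_eq]
  exact (ncard_eq_filter_card p).symm

lemma count_pairs' (hn : 3 ≤ n) (S : Finset ℕ) (hS : ∀ x ∈ S, 0 < x ∧ x < n) (b : Prop)
    (S' : Finset ℕ) (hS' : ∀ i : ℕ, i ∈ S' ↔ (i ∈ S ∨ (b ∧ i = n))) :
    (hatPD n S').ncard
      = (∑ v ∈ Finset.Icc 2 n, (ascTo n S v).ncard *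
          {E : Finset (Fin n) | Even E.card ∧ ((n - v + 1 ≤ E.card) ↔ b)}.ncard)
        + (underlineP n S).ncard *
          {E : Finset (Fin n) | Even E.card ∧ (False ↔ b)}.ncard := by
  rw [count_pairs hn S hS b S' hS']
  congr 1
  · apply Finset.sum_congr rfl
    intro v _
    rw [filtercard_eq_ncard]
  · rw [filtercard_eq_ncard]

lemma count_ge' (m : ℕ) :
    {E : Finset (Fin n) | Even E.card ∧ ((m ≤ E.card) ↔ True)}.ncard = Bsum n m := by
  rw [← filtercard_eq_ncard]
  exact count_ge m

lemma count_all' :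
    {E : Finset (Fin n) | Even E.card ∧ (False ↔ False)}.ncard = Esum n := by
  rw [← filtercard_eq_ncard]
  exact count_all

lemma count_none' :
    {E : Finset (Fin n) | Even E.card ∧ (False ↔ True)}.ncard = 0 := by
  rw [← filtercard_eq_ncard]
  exact count_none

lemma coefPhi' {n : ℕ} (hodd : Odd n) (hn : 3 ≤ n) (v : ℕ) (hv2 : 2 ≤ v) (hvn : v ≤ n) :
    {E : Finset (Fin n) | Even E.card ∧ ((n - v + 1 ≤ E.card) ↔ False)}.ncard
      = Phi (n - 1) (2 * (v / 2)) := by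
  rw [← filtercard_eq_ncard]
  exact coefPhi hodd hn v hv2 hvn

end S16
end
theorem stmt16 (n : ℕ) (hn : 3 ≤ n) (hodd : Odd n)
    (S : Finset ℕ) (hS : ∀ x ∈ S, 0 < x ∧ x < n) :
    (hatPD n S).ncard =
      (∑ k ∈ Finset.Icc 1 ((n - 1) / 2),
        ((ascTo n S (2 * k + 1)).ncard + (ascTo n S (2 * k)).ncard) * Phi (n - 1) (2 * k))
        + (underlineP n S).ncard * 2 ^ (n - 1) ∧
    (hatPD n (insert n S)).ncard =
      ∑ k ∈ Finset.Icc 1 ((n - 1) / 2),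
        ((ascTo n S (2 * k + 1)).ncard + (ascTo n S (2 * k)).ncard) * Psi (n - 1) (2 * k) := by
  constructor
  · have hS' : ∀ i : ℕ, i ∈ S ↔ (i ∈ S ∨ (False ∧ i = n)) := fun i => by tauto
    rw [S16.count_pairs' hn S hS False S hS', S16.count_all', S16.Esum_eq hodd]
    congr 1
    have hre := S16.reindex hodd hn (fun v => (ascTo n S v).ncard) (Phi (n - 1))
    refine Eq.trans ?_ hre
    apply Finset.sum_congr rfl
    intro v hv
    rw [Finset.mem_Icc] at hv
    rw [S16.coefPhi' hodd hn v hv.1 hv.2]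
  · have hS' : ∀ i : ℕ, i ∈ insert n S ↔ (i ∈ S ∨ (True ∧ i = n)) := by
      intro i
      rw [Finset.mem_insert]
      tauto
    rw [S16.count_pairs' hn S hS True (insert n S) hS', S16.count_none',
      Nat.mul_zero, Nat.add_zero]
    have hre := S16.reindex hodd hn (fun v => (ascTo n S v).ncard) (Psi (n - 1))
    refine Eq.trans ?_ hre
    apply Finset.sum_congr rfl
    intro v hv
    rw [Finset.mem_Icc] at hv
    rw [S16.count_ge' (n - v + 1), S16.coefPsi hodd hn v hv.1 hv.2]
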